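/- Let n ≥ 1 and 1 ≤ k ≤ n, let V be a random matrix distributed according to the Haar probability measure on the orthogonal group O(n), and let Ṽ ∈ ℝ^{n×k} be the matrix formed by the first k columns of V. Then for every subset S ⊆ {1,…,n} with |S| = k, letting Ṽ_S ∈ ℝ^{k×k} be the submatrix of Ṽ with rows indexed by S, one has E[det(Ṽ_S)²] = 1/C(n,k), where C(n,k) is the binomial coefficient. -/

import Mathlib

open Equiv Finset Matrix

variable {R : Type*} [CommRing R]

local notation "ε " σ:max => ((Equiv.Perm.sign σ : ℤ) : R)

theorem cb_step1 {k n : ℕ} (A : Matrix (Fin k) (Fin n) R) (B : Matrix (Fin n) (Fin k) R) :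
    det (A * B) = ∑ p : Fin k → Fin n, ∑ σ : Equiv.Perm (Fin k),
      ε σ * ∏ i, A (σ i) (p i) * B (p i) i := by
  simp only [det_apply', mul_apply, prod_univ_sum, mul_sum, Fintype.piFinset_univ]
  rw [Finset.sum_comm]

theorem cb_aux {k n : ℕ} {A : Matrix (Fin k) (Fin n) R} {B : Matrix (Fin n) (Fin k) R}
    {p : Fin k → Fin n} (H : ¬Function.Injective p) :
    (∑ σ : Equiv.Perm (Fin k), ε σ * ∏ x, A (σ x) (p x) * B (p x) x) = 0 := by
  obtain ⟨i, j, hpij, hij⟩ : ∃ i j, p i = p j ∧ i ≠ j := by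
    rw [Function.Injective] at H
    push_neg at H
    exact H
  exact
    sum_involution (fun σ _ => σ * Equiv.swap i j)
      (fun σ _ => by
        have : (∏ x, A (σ x) (p x)) = ∏ x, A ((σ * Equiv.swap i j) x) (p x) :=
          Fintype.prod_equiv (Equiv.swap i j) _ _ (by simp [Equiv.apply_swap_eq_self hpij])
        simp [this, Equiv.Perm.sign_swap hij, -Equiv.Perm.sign_swap', prod_mul_distrib])
      (fun σ _ _ => (not_congr Equiv.mul_swap_eq_iff).mpr hij) (fun _ _ => mem_univ _)
      fun σ _ => Equiv.mul_swap_involutive i j σ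

theorem cb_step2 {k n : ℕ} (A : Matrix (Fin k) (Fin n) R) (B : Matrix (Fin n) (Fin k) R) :
    det (A * B) = ∑ p : Fin k → Fin n with Function.Injective p,
      ∑ σ : Equiv.Perm (Fin k), ε σ * ∏ i, A (σ i) (p i) * B (p i) i := by
  rw [cb_step1]
  refine (sum_subset (filter_subset _ _) fun f _ hinj ↦ cb_aux ?_).symm
  simpa only [true_and, mem_filter, mem_univ] using hinj

theorem cb_square {k : ℕ} (M N : Matrix (Fin k) (Fin k) R) :
    det (M * N) = ∑ τ : Equiv.Perm (Fin k), ∑ σ : Equiv.Perm (Fin k),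
      ε σ * ∏ i, M (σ i) (τ i) * N (τ i) i := by
  rw [cb_step2]
  refine sum_bij (fun p h ↦ Equiv.ofBijective p
      (Finite.injective_iff_bijective.mp (mem_filter.1 h).2)) (fun _ _ ↦ mem_univ _)
    (fun _ _ _ _ h ↦ by injection h)
    (fun b _ ↦ ⟨b, mem_filter.2 ⟨mem_univ _, b.injective⟩, Equiv.coe_fn_injective rfl⟩)
    fun _ _ ↦ rfl

theorem cauchy_binet {k n : ℕ} (A : Matrix (Fin k) (Fin n) R) (B : Matrix (Fin n) (Fin k) R) :
    det (A * B) = ∑ S ∈ (Finset.powersetCard k (univ : Finset (Fin n))).attach,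
      det (A.submatrix id (S.1.orderEmbOfFin (Finset.mem_powersetCard.mp S.2).2) *
        B.submatrix (S.1.orderEmbOfFin (Finset.mem_powersetCard.mp S.2).2) id) := by
  rw [cb_step2]
  have hsq : ∀ (S : {x // x ∈ Finset.powersetCard k (univ : Finset (Fin n))}),
      det (A.submatrix id (S.1.orderEmbOfFin (Finset.mem_powersetCard.mp S.2).2) *
        B.submatrix (S.1.orderEmbOfFin (Finset.mem_powersetCard.mp S.2).2) id) =
      ∑ τ : Equiv.Perm (Fin k), ∑ σ : Equiv.Perm (Fin k),
        ε σ * ∏ i, A (σ i) (S.1.orderEmbOfFin (Finset.mem_powersetCard.mp S.2).2 (τ i)) *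
          B (S.1.orderEmbOfFin (Finset.mem_powersetCard.mp S.2).2 (τ i)) i := fun S => by
    rw [cb_square]; rfl
  simp only [hsq]
  conv_rhs => rw [Finset.sum_sigma']
  refine Eq.symm (Finset.sum_bij
    (i := fun (x : Σ _ : {s // s ∈ Finset.powersetCard k (univ : Finset (Fin n))},
        Equiv.Perm (Fin k)) _ =>
      (x.1.1.orderEmbOfFin (Finset.mem_powersetCard.mp x.1.2).2) ∘ x.2)
    ?_ ?_ ?_ ?_)
  · rintro ⟨S, τ⟩ -
    exact mem_filter.mpr ⟨mem_univ _,
      (S.1.orderEmbOfFin (Finset.mem_powersetCard.mp S.2).2).injective.comp τ.injective⟩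
  · intro x hx y hy h
    obtain ⟨S, τ⟩ := x
    obtain ⟨T, ρ⟩ := y
    simp only at h
    have hST : S = T := by
      apply Subtype.ext
      apply Finset.coe_injective
      have h1 := Finset.range_orderEmbOfFin S.1 (Finset.mem_powersetCard.mp S.2).2
      have h2 := Finset.range_orderEmbOfFin T.1 (Finset.mem_powersetCard.mp T.2).2
      calc (S.1 : Set (Fin n))
          = Set.range (⇑(S.1.orderEmbOfFin (Finset.mem_powersetCard.mp S.2).2) ∘ ⇑τ) := by
            rw [τ.surjective.range_comp, h1]
        _ = Set.range (⇑(T.1.orderEmbOfFin (Finset.mem_powersetCard.mp T.2).2) ∘ ⇑ρ) := by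
            rw [h]
        _ = (T.1 : Set (Fin n)) := by rw [ρ.surjective.range_comp, h2]
    subst hST
    have hτρ : τ = ρ := by
      apply Equiv.ext
      intro i
      exact (S.1.orderEmbOfFin (Finset.mem_powersetCard.mp S.2).2).injective
        (congrFun h i)
    rw [hτρ]
  · intro p hp
    have hinj : Function.Injective p := (mem_filter.mp hp).2
    have hScard : (Finset.image p univ).card = k := by
      rw [Finset.card_image_of_injective _ hinj, card_univ, Fintype.card_fin]
    have hmem : Finset.image p univ ∈ Finset.powersetCard k (univ : Finset (Fin n)) :=
      Finset.mem_powersetCard.mpr ⟨Finset.subset_univ _, hScard⟩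
    set S : {x // x ∈ Finset.powersetCard k (univ : Finset (Fin n))} := ⟨_, hmem⟩ with hSdef
    have hcard : S.1.card = k := (Finset.mem_powersetCard.mp S.2).2
    have hpin : ∀ i, p i ∈ S.1 := fun i => Finset.mem_image_of_mem p (mem_univ i)
    let f : Fin k → Fin k := fun i => (S.1.orderIsoOfFin hcard).symm ⟨p i, hpin i⟩
    have hf : Function.Injective f := by
      intro i j hij
      apply hinj
      have h2 : ((S.1.orderIsoOfFin hcard) ((S.1.orderIsoOfFin hcard).symm ⟨p i, hpin i⟩) : Fin n)
          = ((S.1.orderIsoOfFin hcard) ((S.1.orderIsoOfFin hcard).symm ⟨p j, hpin j⟩) : Fin n) := by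
        show ((S.1.orderIsoOfFin hcard) (f i) : Fin n) = ((S.1.orderIsoOfFin hcard) (f j) : Fin n)
        rw [hij]
      rwa [OrderIso.apply_symm_apply, OrderIso.apply_symm_apply] at h2
    refine ⟨⟨S, Equiv.ofBijective f (Finite.injective_iff_bijective.mp hf)⟩,
      Finset.mem_sigma.mpr ⟨Finset.mem_attach _ _, mem_univ _⟩, ?_⟩
    funext i
    show S.1.orderEmbOfFin _ (f i) = p i
    rw [← Finset.coe_orderIsoOfFin_apply]
    simp [f]
  · rintro ⟨S, τ⟩ -
    rfl

open MeasureTheory Finset Matrix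

/-- Borel measurable structure on the space of real matrices. -/
noncomputable instance matrixMeasurableSpace {n : ℕ} :
    MeasurableSpace (Matrix (Fin n) (Fin n) ℝ) := borel _

instance matrixBorelSpace {n : ℕ} :
    BorelSpace (Matrix (Fin n) (Fin n) ℝ) := ⟨rfl⟩

instance orthogonalBorelSpace {n : ℕ} :
    BorelSpace (Matrix.orthogonalGroup (Fin n) ℝ) :=
  ⟨by borelize (Matrix (Fin n) (Fin n) ℝ); symm; apply borel_comap⟩

section aux

variable {n k : ℕ}

/-- Bound on the absolute value of a determinant with entries bounded by 1. -/
theorem abs_det_le_factorial {M : Matrix (Fin k) (Fin k) ℝ}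
    (hM : ∀ i j, |M i j| ≤ 1) : |M.det| ≤ k.factorial := by
  rw [Matrix.det_apply']
  calc |∑ σ : Equiv.Perm (Fin k), ((Equiv.Perm.sign σ : ℤ) : ℝ) * ∏ i, M (σ i) i|
      ≤ ∑ σ : Equiv.Perm (Fin k), |((Equiv.Perm.sign σ : ℤ) : ℝ) * ∏ i, M (σ i) i| :=
        Finset.abs_sum_le_sum_abs _ _
    _ ≤ ∑ _σ : Equiv.Perm (Fin k), (1 : ℝ) := by
        refine Finset.sum_le_sum fun σ _ => ?_
        rw [abs_mul]
        have h1 : |((Equiv.Perm.sign σ : ℤ) : ℝ)| = 1 := by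
          rcases Int.units_eq_one_or (Equiv.Perm.sign σ) with h | h <;> simp [h]
        rw [h1, one_mul, Finset.abs_prod]
        exact Finset.prod_le_one (fun i _ => abs_nonneg _) fun i _ => hM _ _
    _ = k.factorial := by simp [Fintype.card_perm]

theorem perm_matrix_mem_orthogonal (σ : Equiv.Perm (Fin n)) :
    (σ.toPEquiv.toMatrix : Matrix (Fin n) (Fin n) ℝ) ∈ Matrix.orthogonalGroup (Fin n) ℝ := by
  rw [Matrix.mem_orthogonalGroup_iff']
  have hstar : star (σ.toPEquiv.toMatrix : Matrix (Fin n) (Fin n) ℝ)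
      = (σ⁻¹.toPEquiv.toMatrix : Matrix (Fin n) (Fin n) ℝ) := by
    rw [Matrix.star_eq_conjTranspose]
    have : (σ.toPEquiv.toMatrix : Matrix (Fin n) (Fin n) ℝ)ᴴ
        = (σ.toPEquiv.toMatrix : Matrix (Fin n) (Fin n) ℝ)ᵀ := by
      ext i j
      simp [Matrix.conjTranspose_apply, PEquiv.toMatrix_apply]
    rw [this, ← PEquiv.toMatrix_symm, ← Equiv.toPEquiv_symm]
    rfl
  rw [← Matrix.conjTranspose_eq_transpose_of_trivial, ← Matrix.star_eq_conjTranspose, hstar, ← PEquiv.toMatrix_trans, ← Equiv.toPEquiv_trans]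
  have h1 : (σ⁻¹ : Equiv.Perm (Fin n)).trans σ = Equiv.refl (Fin n) := by
    ext x; simp
  rw [h1, Equiv.toPEquiv_refl, PEquiv.toMatrix_refl]

end aux

theorem expected_square_minor_haar {n k : ℕ} (hn : 1 ≤ n) (hk1 : 1 ≤ k)
    (hkn : k ≤ n)
    (μ : Measure (Matrix.orthogonalGroup (Fin n) ℝ)) [IsProbabilityMeasure μ]
    (hinv : ∀ g : Matrix.orthogonalGroup (Fin n) ℝ,
      Measure.map (fun x => g * x) μ = μ)
    (S : Finset (Fin n)) (hS : S.card = k) :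
    ∫ V : Matrix.orthogonalGroup (Fin n) ℝ,
        (((V : Matrix (Fin n) (Fin n) ℝ).submatrix
            (fun i : Fin k => (S.orderIsoOfFin hS i : Fin n))
            (Fin.castLE hkn)).det) ^ 2 ∂μ =
      1 / (n.choose k : ℝ) := by
  classical
  -- the integrand associated to a subset `T` of cardinality `k`
  let F : ∀ (T : Finset (Fin n)), T.card = k → (Matrix.orthogonalGroup (Fin n) ℝ → ℝ) := fun T hT V =>
    (((V : Matrix (Fin n) (Fin n) ℝ).submatrix (⇑(T.orderEmbOfFin hT))
      (Fin.castLE hkn)).det) ^ 2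
  -- continuity of the integrands
  have hFcont : ∀ T hT, Continuous (F T hT) := by
    intro T hT
    exact ((continuous_subtype_val.matrix_submatrix _ _).matrix_det).pow 2
  have hFmeas : ∀ T hT, AEStronglyMeasurable (F T hT) μ :=
    fun T hT => (hFcont T hT).aestronglyMeasurable
  -- boundedness and integrability
  have hFbdd : ∀ T hT (V : Matrix.orthogonalGroup (Fin n) ℝ), ‖F T hT V‖ ≤ (k.factorial : ℝ) ^ 2 := by
    intro T hT V
    have hentry : ∀ i j, |(V : Matrix (Fin n) (Fin n) ℝ) i j| ≤ 1 := by
      intro i j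
      simpa [Real.norm_eq_abs] using entry_norm_bound_of_unitary V.2 i j
    have hdet := abs_det_le_factorial (M :=
      (V : Matrix (Fin n) (Fin n) ℝ).submatrix (⇑(T.orderEmbOfFin hT)) (Fin.castLE hkn))
      (fun i j => hentry _ _)
    have h0 : (0:ℝ) ≤ k.factorial := by positivity
    calc ‖F T hT V‖ = |(((V : Matrix (Fin n) (Fin n) ℝ).submatrix (⇑(T.orderEmbOfFin hT))
          (Fin.castLE hkn)).det)| ^ 2 := by
          simp [F, Real.norm_eq_abs, abs_pow, sq_abs]
      _ ≤ (k.factorial : ℝ) ^ 2 := by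
          apply pow_le_pow_left₀ (abs_nonneg _) hdet
  have hFint : ∀ T hT, Integrable (F T hT) μ := by
    intro T hT
    exact (integrable_const ((k.factorial : ℝ) ^ 2)).mono' (hFmeas T hT)
      (Filter.Eventually.of_forall (hFbdd T hT))
  -- the key pointwise identity (Cauchy–Binet)
  have hsum1 : ∀ V : Matrix.orthogonalGroup (Fin n) ℝ, ∑ T ∈ (Finset.powersetCard k (univ : Finset (Fin n))).attach,
      F T.1 (Finset.mem_powersetCard.mp T.2).2 V = 1 := by
    intro V
    have horth : star (V : Matrix (Fin n) (Fin n) ℝ) * (V : Matrix (Fin n) (Fin n) ℝ) = 1 :=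
      (Unitary.mem_iff.mp V.2).1
    set W : Matrix (Fin n) (Fin k) ℝ :=
      (V : Matrix (Fin n) (Fin n) ℝ).submatrix id (Fin.castLE hkn) with hW
    have hprod : Wᵀ * W = 1 := by
      ext i j
      have h1 := congrFun (congrFun horth (Fin.castLE hkn i)) (Fin.castLE hkn j)
      have h2 : (star (V : Matrix (Fin n) (Fin n) ℝ) * (V : Matrix (Fin n) (Fin n) ℝ))
          (Fin.castLE hkn i) (Fin.castLE hkn j)
          = (Wᵀ * W) i j := by
        simp [Matrix.mul_apply, Matrix.star_apply, hW]
      rw [h2] at h1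
      rw [h1]
      by_cases hij : i = j
      · simp [hij, Matrix.one_apply]
      · have hcne : Fin.castLE hkn i ≠ Fin.castLE hkn j := by
          intro hc
          exact hij (Fin.castLE_injective hkn hc)
        simp [Matrix.one_apply, hij, hcne]
    have h1 : (1:ℝ) = Matrix.det (Wᵀ * W) := by rw [hprod, Matrix.det_one]
    rw [h1, cauchy_binet]
    refine Finset.sum_congr rfl fun T _ => ?_
    have hsub1 : Wᵀ.submatrix id (⇑(T.1.orderEmbOfFin (Finset.mem_powersetCard.mp T.2).2))
        = ((V : Matrix (Fin n) (Fin n) ℝ).submatrix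
            (⇑(T.1.orderEmbOfFin (Finset.mem_powersetCard.mp T.2).2)) (Fin.castLE hkn))ᵀ := by
      ext i j; simp [hW]
    have hsub2 : W.submatrix (⇑(T.1.orderEmbOfFin (Finset.mem_powersetCard.mp T.2).2)) id
        = (V : Matrix (Fin n) (Fin n) ℝ).submatrix
            (⇑(T.1.orderEmbOfFin (Finset.mem_powersetCard.mp T.2).2)) (Fin.castLE hkn) := by
      ext i j; simp [hW]
    rw [hsub1, hsub2, Matrix.det_mul, Matrix.det_transpose]
    simp [F, sq]
  -- all the integrals agree
  have hconst : ∀ (T : Finset (Fin n)) (hT : T.card = k),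
      ∫ V, F T hT V ∂μ = ∫ V, F S hS V ∂μ := by
    intro T hT
    -- construct a permutation sending the embedding of `S` to that of `T`
    have hcard1 : Fintype.card {x : Fin n // ¬ x ∈ S} = Fintype.card {x : Fin n // ¬ x ∈ T} := by
      rw [Fintype.card_subtype_compl, Fintype.card_subtype_compl]
      congr 1
      simp only [Fintype.card_coe]
      rw [hS, hT]
    let σ : Equiv.Perm (Fin n) := Equiv.subtypeCongr
      ((S.orderIsoOfFin hS).toEquiv.symm.trans (T.orderIsoOfFin hT).toEquiv)
      (Fintype.equivOfCardEq hcard1)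
    have hσ : ∀ i : Fin k, σ ((S.orderEmbOfFin hS) i) = T.orderEmbOfFin hT i := by
      intro i
      have hmem : (S.orderEmbOfFin hS i) ∈ S := Finset.orderEmbOfFin_mem _ _ _
      show Equiv.subtypeCongr _ _ _ = _
      unfold Equiv.subtypeCongr
      rw [Equiv.trans_apply, Equiv.trans_apply,
        Equiv.sumCompl_symm_apply_of_pos hmem]
      have : (⟨S.orderEmbOfFin hS i, hmem⟩ : {x // x ∈ S}) = (S.orderIsoOfFin hS) i := by
        apply Subtype.ext
        simp [Finset.coe_orderIsoOfFin_apply]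
      simp only [Equiv.sumCongr_apply, Sum.map_inl, this]
      simp [Finset.coe_orderIsoOfFin_apply]
    let g : Matrix.orthogonalGroup (Fin n) ℝ := ⟨σ.toPEquiv.toMatrix, perm_matrix_mem_orthogonal σ⟩
    have hmulcont : Continuous (fun x : Matrix.orthogonalGroup (Fin n) ℝ => g * x) := by
      apply Continuous.subtype_mk
      exact continuous_const.matrix_mul continuous_subtype_val
    have hcomp : ∀ x : Matrix.orthogonalGroup (Fin n) ℝ, F S hS (g * x) = F T hT x := by
      intro x
      have hval : ((g * x : Matrix.orthogonalGroup (Fin n) ℝ) : Matrix (Fin n) (Fin n) ℝ)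
          = (x : Matrix (Fin n) (Fin n) ℝ).submatrix σ id := by
        show σ.toPEquiv.toMatrix * (x : Matrix (Fin n) (Fin n) ℝ) = _
        exact PEquiv.toMatrix_toPEquiv_mul σ _
      have hsub : ((g * x : Matrix.orthogonalGroup (Fin n) ℝ) : Matrix (Fin n) (Fin n) ℝ).submatrix (⇑(S.orderEmbOfFin hS))
            (Fin.castLE hkn)
          = (x : Matrix (Fin n) (Fin n) ℝ).submatrix (⇑(T.orderEmbOfFin hT)) (Fin.castLE hkn) := by
        have hfun : ⇑σ ∘ ⇑(S.orderEmbOfFin hS) = ⇑(T.orderEmbOfFin hT) := funext hσ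
        rw [hval, Matrix.submatrix_submatrix, hfun, Function.id_comp]
      simp only [F, hsub]
    calc ∫ V, F T hT V ∂μ = ∫ V, F S hS (g * V) ∂μ := by
          refine integral_congr_ae (Filter.Eventually.of_forall fun V => ?_)
          exact (hcomp V).symm
      _ = ∫ V, F S hS V ∂(Measure.map (fun x => g * x) μ) := by
          rw [integral_map hmulcont.aemeasurable]
          rw [hinv]
          exact (hFmeas S hS)
      _ = ∫ V, F S hS V ∂μ := by rw [hinv]
  -- summing up
  have hsum : ∑ T ∈ (Finset.powersetCard k (univ : Finset (Fin n))).attach,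
      ∫ V, F T.1 (Finset.mem_powersetCard.mp T.2).2 V ∂μ = 1 := by
    rw [← integral_finset_sum _ (fun T _ => hFint T.1 (Finset.mem_powersetCard.mp T.2).2)]
    rw [integral_congr_ae (Filter.Eventually.of_forall hsum1)]
    simp
  have hcard : ((Finset.powersetCard k (univ : Finset (Fin n))).attach.card : ℝ)
      = (n.choose k : ℝ) := by
    rw [Finset.card_attach, Finset.card_powersetCard, Finset.card_univ, Fintype.card_fin]
  rw [Finset.sum_congr rfl (fun T _ => hconst T.1 (Finset.mem_powersetCard.mp T.2).2),
    Finset.sum_const, nsmul_eq_mul, hcard] at hsum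
  have hne : (n.choose k : ℝ) ≠ 0 := by
    exact_mod_cast (Nat.choose_pos hkn).ne'
  have hIS : ∫ V, F S hS V ∂μ = 1 / (n.choose k : ℝ) := by
    field_simp at hsum ⊢
    linarith [hsum]
  rw [← hIS]
  refine integral_congr_ae (Filter.Eventually.of_forall fun V => ?_)
  have he : (fun i : Fin k => ((S.orderIsoOfFin hS) i : Fin n)) = ⇑(S.orderEmbOfFin hS) :=
    funext fun i => Finset.coe_orderIsoOfFin_apply _ _ _
  simp only [F, he]
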